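/- Let k be a field, n ≥ 2, and let λ₁,…,λₙ be pairwise distinct nonzero elements of k. Define linear maps α, β, γ : k^n → k^n by α(e(i)) = e(i), β(e(i)) = λᵢ e(i), and γ(e(i)) = e(i+1) with indices mod n (e(n+1) = e(1)). Then the only linear maps f : k^n → k^n satisfying f∘α = α∘f, f∘β = β∘f, and f∘γ = γ∘f are the scalar multiples of the identity. -/

import Mathlib

/- X(λ₁,…,λₙ) is a brick: every endomorphism of the 3-Kronecker representation
   (k^n, k^n; id, diag(λᵢ), cyclic shift) is a scalar multiple of the identity. -/

/-- The diagonal map β with β(e i) = λᵢ e i. -/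
def kroneckerBeta (k : Type) [Field k] (n : ℕ) (l : Fin n → k) :
    (Fin n → k) →ₗ[k] (Fin n → k) where
  toFun v i := l i * v i
  map_add' u v := by funext i; simp [mul_add]
  map_smul' c v := by funext i; simp; ring

/-- The cyclic shift map γ with γ(e i) = e (i+1) (indices mod n). -/
def kroneckerGamma (k : Type) [Field k] (n : ℕ) :
    (Fin n → k) →ₗ[k] (Fin n → k) where
  toFun v i := v ((finRotate n).symm i)
  map_add' u v := rfl
  map_smul' c v := rfl

theorem stmt0 (k : Type) [Field k] (n : ℕ) (hn : 2 ≤ n) (l : Fin n → k)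
    (hne : ∀ i, l i ≠ 0) (hinj : Function.Injective l)
    (f : (Fin n → k) →ₗ[k] (Fin n → k))
    (hα : f.comp LinearMap.id = LinearMap.comp LinearMap.id f)
    (hβ : f.comp (kroneckerBeta k n l) = (kroneckerBeta k n l).comp f)
    (hγ : f.comp (kroneckerGamma k n) = (kroneckerGamma k n).comp f) :
    ∃ c : k, f = c • LinearMap.id := by
  -- e j := Pi.single j 1
  set d : Fin n → k := fun j => f (Pi.single j 1) j with hd
  -- off-diagonal entries vanish
  have hoff : ∀ i j : Fin n, i ≠ j → f (Pi.single j 1) i = 0 := by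
    intro i j hij
    have h1 : kroneckerBeta k n l (Pi.single j 1) = l j • (Pi.single j 1 : Fin n → k) := by
      funext x
      by_cases hx : x = j <;>
        simp [kroneckerBeta, Pi.single_apply, hx]
    have h2 := congrFun (congrArg (fun g => (g : (Fin n → k) →ₗ[k] (Fin n → k))
      (Pi.single j 1)) hβ) i
    simp only [LinearMap.comp_apply] at h2
    rw [h1] at h2
    simp only [map_smul] at h2
    have h3 : l j * f (Pi.single j 1) i = l i * f (Pi.single j 1) i := by
      simpa [kroneckerBeta, Pi.smul_apply, smul_eq_mul] using h2
    have hlij : l j - l i ≠ 0 := sub_ne_zero.mpr (fun h => hij (hinj h).symm)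
    have : (l j - l i) * f (Pi.single j 1) i = 0 := by ring_nf; linear_combination h3
    exact (mul_eq_zero.mp this).resolve_left hlij
  have hdiag : ∀ j : Fin n, f (Pi.single j 1) = d j • (Pi.single j 1 : Fin n → k) := by
    intro j; funext i
    by_cases hij : i = j
    · subst hij; simp [Pi.single_apply, d]
    · simp [Pi.single_apply, hij, hoff i j hij]
  -- γ moves single j to single (rot j)
  have hγsingle : ∀ j : Fin n,
      kroneckerGamma k n (Pi.single j 1) = Pi.single (finRotate n j) 1 := by
    intro j; funext x
    simp only [kroneckerGamma, LinearMap.coe_mk, AddHom.coe_mk, Pi.single_apply]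
    by_cases hx : (finRotate n).symm x = j
    · have : x = finRotate n j := by rw [← hx, Equiv.apply_symm_apply]
      rw [if_pos hx, if_pos this]
    · have : x ≠ finRotate n j := by
        intro h; exact hx (by rw [h, Equiv.symm_apply_apply])
      rw [if_neg hx, if_neg this]
  have hstep : ∀ j : Fin n, d (finRotate n j) = d j := by
    intro j
    have h2 := congrFun (congrArg (fun g => (g : (Fin n → k) →ₗ[k] (Fin n → k))
      (Pi.single j 1)) hγ) (finRotate n j)
    simp only [LinearMap.comp_apply] at h2
    rw [hγsingle j, hdiag (finRotate n j), hdiag j, map_smul, hγsingle j] at h2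
    simpa [Pi.single_apply, d] using h2
  -- d is constant
  obtain ⟨m, rfl⟩ : ∃ m, n = m + 1 := ⟨n - 1, by omega⟩
  have hstep' : ∀ j : Fin (m + 1), d (j + 1) = d j := by
    intro j
    have := hstep j
    rwa [finRotate_succ_apply] at this
  open Fin.NatCast in
  have hnat : ∀ a : ℕ, d ((a : Fin (m + 1))) = d 0 := by
    intro a
    induction a with
    | zero => simp
    | succ a ih => rw [Nat.cast_add, Nat.cast_one, hstep', ih]
  have hconst : ∀ j : Fin (m + 1), d j = d 0 := by
    open Fin.NatCast in
    intro j
    have := hnat j.val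
    rwa [Fin.cast_val_eq_self] at this
  refine ⟨d 0, ?_⟩
  apply (Pi.basisFun k (Fin (m + 1))).ext
  intro j
  simp only [Pi.basisFun_apply, LinearMap.smul_apply, LinearMap.id_apply]
  rw [hdiag j, hconst j]
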